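/- arXiv:1706.06219 — 5 statements merged into one kernel-verified Lean document; each statement's English description precedes it below -/
import Mathlib

section
/- Let X and Y be complex Banach spaces, let l ≥ 1, let P : X → Y be a compact continuous l-homogeneous polynomial, and let δ > 0. Then there exist finitely many functionals y₁*, …, y_N* in the closed unit ball of the dual space Y* such that for every strongly measurable f : 𝕋 → X with ‖f(t)‖_X ≤ 1 for almost every t, and for every k ∈ ℤ, one has ‖(P∘f)^̂(k)‖_Y ≤ δ/2 + max_{1 ≤ j ≤ N} |y_j*((P∘f)^̂(k))|. -/
open MeasureTheory Filter

/-- If `P` is a compact continuous `l`-homogeneous polynomial between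
complex Banach spaces and `δ > 0`, then there are finitely many functionals
`y₁*, …, y_N*` in the closed unit ball of `Y*` such that for every strongly measurable
`f : 𝕋 → X` with `‖f t‖ ≤ 1` a.e. and every `k ∈ ℤ`,
`‖(P∘f)^(k)‖ ≤ δ/2 + max_j |y_j*((P∘f)^(k))|`. -/
theorem stmt2 {X Y : Type*} [NormedAddCommGroup X] [NormedSpace ℂ X] [CompleteSpace X]
    [NormedAddCommGroup Y] [NormedSpace ℂ Y] [CompleteSpace Y]
    (l : ℕ) (hl : 1 ≤ l)
    (M : ContinuousMultilinearMap ℂ (fun _ : Fin l => X) Y)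
    (P : X → Y) (hP : ∀ x, P x = M (fun _ => x))
    (hPcomp : IsCompact (closure (P '' Metric.closedBall 0 1)))
    (δ : ℝ) (hδ : 0 < δ) :
    ∃ (N : ℕ) (y : Fin N → (Y →L[ℂ] ℂ)), 0 < N ∧ (∀ j, ‖y j‖ ≤ 1) ∧
      ∀ f : ℝ → X,
        AEStronglyMeasurable f (volume.restrict (Set.Ioc (0:ℝ) (2 * Real.pi))) →
        (∀ᵐ t ∂(volume.restrict (Set.Ioc (0:ℝ) (2 * Real.pi))), ‖f t‖ ≤ 1) →
        ∀ k : ℤ,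
          ‖(2 * Real.pi : ℂ)⁻¹ •
              ∫ t in (0:ℝ)..(2 * Real.pi),
                Complex.exp (-Complex.I * (k : ℂ) * (t : ℂ)) • P (f t)‖ ≤
            δ / 2 +
              ⨆ j : Fin N,
                ‖y j ((2 * Real.pi : ℂ)⁻¹ •
                    ∫ t in (0:ℝ)..(2 * Real.pi),
                      Complex.exp (-Complex.I * (k : ℂ) * (t : ℂ)) • P (f t))‖ := by
  have twopi_pos : (0:ℝ) < 2 * Real.pi := by positivity
  set K : Set Y := closure (P '' Metric.closedBall 0 1) with hK
  set K2 : Set Y := (fun p : ℂ × Y => p.1 • p.2) '' ((Metric.closedBall (0:ℂ) 1) ×ˢ K) with hK2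
  have hK2comp : IsCompact K2 :=
    ((isCompact_closedBall (0:ℂ) 1).prod hPcomp).image (continuous_fst.smul continuous_snd)
  set K' : Set Y := closure (convexHull ℝ K2) with hK'def
  have hK'conv : Convex ℝ K' := (convex_convexHull ℝ K2).closure
  have hK'closed : IsClosed K' := isClosed_closure
  have hK'comp : IsCompact K' :=
    TotallyBounded.isCompact_of_isClosed
      ((totallyBounded_convexHull.mpr hK2comp.totallyBounded).closure) hK'closed
  -- finite δ/4-net
  obtain ⟨t, htf, htcover⟩ :=
    Metric.totallyBounded_iff.mp hK'comp.totallyBounded (δ/4) (by positivity)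
  set n := htf.toFinset.card with hn
  set e := htf.toFinset.equivFin with he
  set z : Fin (n+1) → Y := fun j => if h : (j : ℕ) < n then (e.symm ⟨j, h⟩ : Y) else 0 with hz'
  have hz : ∀ w ∈ t, ∃ j, z j = w := by
    intro w hw
    have hw' : w ∈ htf.toFinset := htf.mem_toFinset.mpr hw
    refine ⟨(e ⟨w, hw'⟩).castSucc, ?_⟩
    have h : ((e ⟨w, hw'⟩).castSucc : ℕ) < n := (e ⟨w, hw'⟩).isLt
    simp only [hz', dif_pos h]
    have : (⟨((e ⟨w, hw'⟩).castSucc : ℕ), h⟩ : Fin n) = e ⟨w, hw'⟩ := by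
      ext; simp
    rw [this, e.symm_apply_apply]
  choose y hy1 hy2 using fun j => exists_dual_vector'' ℂ (z j)
  refine ⟨n+1, y, Nat.succ_pos n, hy1, ?_⟩
  intro f hfm hfb k
  set μ := volume.restrict (Set.Ioc (0:ℝ) (2*Real.pi)) with hμ
  have hfin : IsFiniteMeasure μ := by
    constructor
    rw [hμ, Measure.restrict_apply_univ, Real.volume_Ioc]
    exact ENNReal.ofReal_lt_top
  set g : ℝ → Y := fun s => Complex.exp (-Complex.I * (k:ℂ) * (s:ℂ)) • P (f s) with hg
  have hPcont : Continuous P := by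
    rw [show P = fun x => M (fun _ => x) from funext hP]
    exact M.cont.comp (continuous_pi fun _ => continuous_id)
  have hMb : ∀ x : X, ‖x‖ ≤ 1 → ‖P x‖ ≤ ‖M‖ := by
    intro x hx
    rw [hP]
    calc ‖M (fun _ => x)‖ ≤ ‖M‖ * ∏ _i : Fin l, ‖x‖ := M.le_opNorm _
      _ ≤ ‖M‖ * 1 := by
          apply mul_le_mul_of_nonneg_left _ (norm_nonneg M)
          rw [Finset.prod_const, Finset.card_fin]
          exact pow_le_one₀ (norm_nonneg x) hx
      _ = ‖M‖ := mul_one _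
  have hexp : ∀ s : ℝ, ‖Complex.exp (-Complex.I * (k:ℂ) * (s:ℂ))‖ = 1 := by
    intro s
    rw [Complex.norm_exp]
    simp
  have hgm : AEStronglyMeasurable g μ := by
    refine AEStronglyMeasurable.smul ?_ (hPcont.comp_aestronglyMeasurable hfm)
    exact (Complex.continuous_exp.comp
      (continuous_const.mul Complex.continuous_ofReal)).aestronglyMeasurable
  have hgi : Integrable g μ := by
    refine Integrable.mono' (integrable_const ‖M‖) hgm ?_
    filter_upwards [hfb] with s hs
    rw [hg]
    simp only
    rw [norm_smul, hexp, one_mul]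
    exact hMb _ hs
  have hgmem : ∀ᵐ s ∂μ, g s ∈ K' := by
    filter_upwards [hfb] with s hs
    refine subset_closure (subset_convexHull ℝ _ ?_)
    refine ⟨(Complex.exp (-Complex.I * (k:ℂ) * (s:ℂ)), P (f s)), ⟨?_, ?_⟩, rfl⟩
    · rw [Metric.mem_closedBall, dist_zero_right]
      exact le_of_eq (hexp s)
    · exact subset_closure ⟨f s, Metric.mem_closedBall.mpr (by simpa using hs), rfl⟩
  have hμt0 : volume (Set.Ioc (0:ℝ) (2*Real.pi)) ≠ 0 := by
    rw [Real.volume_Ioc]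
    simp [ENNReal.ofReal_eq_zero, not_le, twopi_pos, Real.pi_pos]
  have hμtT : volume (Set.Ioc (0:ℝ) (2*Real.pi)) ≠ ⊤ := by
    rw [Real.volume_Ioc]; exact ENNReal.ofReal_ne_top
  have havg := hK'conv.set_average_mem hK'closed hμt0 hμtT hgmem hgi
  rw [setAverage_eq, measureReal_def, Real.volume_Ioc, ENNReal.toReal_ofReal (by linarith)] at havg
  -- rewrite the goal's vector as a real smul of the set integral
  have hrw : (2 * Real.pi : ℂ)⁻¹ •
      (∫ s in (0:ℝ)..(2*Real.pi), Complex.exp (-Complex.I * (k:ℂ) * (s:ℂ)) • P (f s))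
      = (2*Real.pi - 0)⁻¹ • ∫ s in Set.Ioc (0:ℝ) (2*Real.pi), g s := by
    rw [intervalIntegral.integral_of_le twopi_pos.le]
    rw [show ((2 * Real.pi : ℂ)) = (((2*Real.pi : ℝ)) : ℂ) by push_cast; ring]
    rw [← Complex.ofReal_inv, Complex.coe_smul, sub_zero]
  have hvK' : ((2 * Real.pi : ℂ)⁻¹ •
      ∫ s in (0:ℝ)..(2*Real.pi), Complex.exp (-Complex.I * (k:ℂ) * (s:ℂ)) • P (f s)) ∈ K' := by
    rw [hrw]; exact havg
  set v : Y := (2 * Real.pi : ℂ)⁻¹ •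
      ∫ s in (0:ℝ)..(2*Real.pi), Complex.exp (-Complex.I * (k:ℂ) * (s:ℂ)) • P (f s) with hv
  obtain ⟨w, hw, hvw⟩ := Set.mem_iUnion₂.mp (htcover hvK')
  obtain ⟨j, rfl⟩ := hz w hw
  have hdist : ‖v - z j‖ < δ/4 := by
    rw [← dist_eq_norm]
    exact Metric.mem_ball.mp hvw
  have hzj : ‖y j (z j)‖ = ‖z j‖ := by rw [hy2 j]; simp
  have hop : ‖y j (z j - v)‖ ≤ ‖z j - v‖ := by
    calc ‖y j (z j - v)‖ ≤ ‖y j‖ * ‖z j - v‖ := (y j).le_opNorm _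
      _ ≤ 1 * ‖z j - v‖ := mul_le_mul_of_nonneg_right (hy1 j) (norm_nonneg _)
      _ = ‖z j - v‖ := one_mul _
  have hzv : ‖z j - v‖ < δ/4 := by rwa [norm_sub_rev]
  have htri : ‖z j‖ ≤ ‖y j v‖ + δ/4 := by
    have h1 : ‖y j (z j)‖ ≤ ‖y j v‖ + ‖y j (z j - v)‖ := by
      calc ‖y j (z j)‖ = ‖y j v + y j (z j - v)‖ := by
            rw [← map_add, show v + (z j - v) = z j by abel]
        _ ≤ ‖y j v‖ + ‖y j (z j - v)‖ := norm_add_le _ _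
    rw [hzj] at h1
    linarith [lt_of_le_of_lt hop hzv]
  have hvz : ‖v‖ ≤ ‖z j‖ + δ/4 := by
    have := norm_sub_norm_le v (z j)
    linarith
  have hfinal : ‖v‖ ≤ δ/2 + ‖y j v‖ := by linarith
  calc ‖v‖ ≤ δ/2 + ‖y j v‖ := hfinal
    _ ≤ δ/2 + ⨆ i : Fin (n+1), ‖y i v‖ := by
        gcongr
        exact le_ciSup (Set.Finite.bddAbove (Set.finite_range fun i : Fin (n+1) => ‖y i v‖)) j
end

section
/- Let X and Y be complex Banach spaces, let l ≥ 1, let P : X → Y be a compact continuous l-homogeneous polynomial, and let δ > 0. Then there exists L = L(δ) ∈ ℕ such that for every strongly measurable f : 𝕋 → X with ‖f(t)‖_X ≤ 1 for almost every t, the set {k ∈ ℤ : ‖(P∘f)^̂(k)‖_Y ≥ δ} has at most L elements. -/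
open MeasureTheory Filter

section Helpers
open Set Real AddCircle

private lemma count_large (a : ℤ → ℝ) (hsum : Summable fun k => a k ^ 2) (C : ℝ)
    (htsum : ∑' k, a k ^ 2 ≤ C) {η : ℝ} (hη : 0 < η) :
    {k : ℤ | η ≤ a k}.Finite ∧ {k : ℤ | η ≤ a k}.ncard ≤ ⌈C / η ^ 2⌉₊ := by
  set N := ⌈C / η ^ 2⌉₊ with hN
  have key : ∀ F : Finset ℤ, ↑F ⊆ {k : ℤ | η ≤ a k} → F.card ≤ N := by
    intro F hF
    have h1 : (F.card : ℝ) * η ^ 2 ≤ C := by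
      calc (F.card : ℝ) * η ^ 2 = ∑ _k ∈ F, η ^ 2 := by
            rw [Finset.sum_const, nsmul_eq_mul]
        _ ≤ ∑ k ∈ F, a k ^ 2 := Finset.sum_le_sum fun k hk =>
            pow_le_pow_left₀ hη.le (hF hk) 2
        _ ≤ ∑' k, a k ^ 2 := Summable.sum_le_tsum F (fun k _ => sq_nonneg _) hsum
        _ ≤ C := htsum
    have h2 : (F.card : ℝ) ≤ C / η ^ 2 := by
      rw [le_div_iff₀ (by positivity)]; exact h1
    exact_mod_cast h2.trans (Nat.le_ceil _)
  have hfin : {k : ℤ | η ≤ a k}.Finite := by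
    by_contra h
    obtain ⟨F, hFs, hFc⟩ := Set.Infinite.exists_subset_card_eq h (N + 1)
    have := key F hFs
    omega
  refine ⟨hfin, ?_⟩
  have := key hfin.toFinset (by simp)
  rwa [Set.ncard_eq_toFinset_card _ hfin]

private lemma bessel {T : ℝ} [hT : Fact (0 < T)] (u : AddCircle T → ℂ) (hu : Measurable u)
    (hbd : ∀ x, ‖u x‖ ≤ 1) :
    Summable (fun k : ℤ => ‖fourierCoeff u k‖ ^ 2) ∧
      ∑' k : ℤ, ‖fourierCoeff u k‖ ^ 2 ≤ 1 := by
  have hmem : MemLp u 2 haarAddCircle :=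
    MemLp.of_bound hu.aestronglyMeasurable 1 (Filter.Eventually.of_forall hbd)
  set g := hmem.toLp u with hg
  have hge : (g : AddCircle T → ℂ) =ᵐ[haarAddCircle] u := hmem.coeFn_toLp
  have hcoeff : ∀ k : ℤ, fourierCoeff (g : AddCircle T → ℂ) k = fourierCoeff u k := by
    intro k
    apply integral_congr_ae
    filter_upwards [hge] with x hx
    rw [hx]
  have hsum : Summable (fun k : ℤ => ‖fourierCoeff u k‖ ^ 2) := by
    have hm2 := lp.memℓp (fourierBasis.repr g)
    rw [memℓp_gen_iff (by norm_num)] at hm2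
    have : (fun i : ℤ => ‖fourierBasis.repr g i‖ ^ (2 : ENNReal).toReal) =
        fun k : ℤ => ‖fourierCoeff u k‖ ^ 2 := by
      funext i
      rw [fourierBasis_repr, hcoeff]
      norm_num
    rwa [this] at hm2
  refine ⟨hsum, ?_⟩
  have h1 : ∑' k : ℤ, ‖fourierCoeff u k‖ ^ 2 =
      ∫ t, ‖(g : AddCircle T → ℂ) t‖ ^ 2 ∂haarAddCircle := by
    rw [← tsum_sq_fourierCoeff g]
    exact tsum_congr fun k => by rw [hcoeff]
  rw [h1]
  have h2 : ∫ t, ‖(g : AddCircle T → ℂ) t‖ ^ 2 ∂haarAddCircle =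
      ∫ t, ‖u t‖ ^ 2 ∂haarAddCircle := by
    apply integral_congr_ae
    filter_upwards [hge] with x hx
    rw [hx]
  rw [h2]
  have hint : Integrable (fun t => ‖u t‖ ^ 2) haarAddCircle := by
    apply (integrable_const (1 : ℝ)).mono' ((hu.norm.pow_const 2).aestronglyMeasurable)
    filter_upwards with x
    rw [Real.norm_eq_abs, abs_of_nonneg (by positivity)]
    exact pow_le_one₀ (norm_nonneg _) (hbd x)
  calc ∫ t, ‖u t‖ ^ 2 ∂haarAddCircle ≤ ∫ _t, (1 : ℝ) ∂haarAddCircle := by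
        apply integral_mono_ae hint (integrable_const 1)
        filter_upwards with x
        exact pow_le_one₀ (norm_nonneg _) (hbd x)
    _ = 1 := by simp

private lemma meas_liftIoc {T : ℝ} [hT : Fact (0 < T)] (w : ℝ → ℂ) (hw : Measurable w) :
    Measurable (AddCircle.liftIoc T 0 w) :=
  (hw.comp measurable_subtype_coe).comp (AddCircle.measurableEquivIoc T 0).measurable

private lemma fourierCoeff_liftIoc [hT : Fact (0 < 2 * Real.pi)] (w : ℝ → ℂ) (k : ℤ) :
    fourierCoeff (AddCircle.liftIoc (2 * Real.pi) 0 w) k =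
      (2 * Real.pi : ℂ)⁻¹ *
        ∫ t in (0:ℝ)..(2 * Real.pi), w t * Complex.exp (-Complex.I * k * t) := by
  rw [fourierCoeff_eq_intervalIntegral _ k 0, zero_add]
  have h1 : ∫ x in (0:ℝ)..(2 * π), (fourier (-k) (x : AddCircle (2 * π)) : ℂ) •
      AddCircle.liftIoc (2 * π) 0 w x =
      ∫ t in (0:ℝ)..(2 * π), w t * Complex.exp (-Complex.I * k * t) := by
    apply intervalIntegral.integral_congr_ae
    filter_upwards with x hx
    rw [Set.uIoc_of_le (by positivity)] at hx
    have hx' : x ∈ Set.Ioc (0:ℝ) (0 + 2 * π) := by rwa [zero_add]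
    rw [AddCircle.liftIoc_coe_apply hx', fourier_coe_apply, smul_eq_mul, mul_comm]
    congr 2
    have hπ : (2 * Real.pi : ℂ) ≠ 0 := by
      simp [Real.pi_ne_zero]
    push_cast
    field_simp
  rw [h1]
  rw [Complex.real_smul]
  congr 1
  push_cast
  rw [one_div]

end Helpers

private lemma aux_eta (δ R₀ c : ℝ) (hR : R₀ ≠ 0) : δ / (c * R₀) * R₀ = δ / c := by
  rw [div_mul_eq_mul_div, mul_comm c R₀, ← div_div, mul_div_assoc, div_self hR, mul_one]

private lemma aux_b2 (δ x : ℝ) (hδ : 0 ≤ δ) (hx : 0 ≤ x) :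
    x * (δ / (4 * (x + 1))) ≤ δ / 4 := by
  have hx1 : (0:ℝ) < x + 1 := by linarith
  calc x * (δ / (4 * (x + 1))) ≤ (x + 1) * (δ / (4 * (x + 1))) :=
        mul_le_mul_of_nonneg_right (by linarith) (by positivity)
    _ = δ / 4 := by field_simp

/-- If `P` is a compact continuous `l`-homogeneous polynomial between
complex Banach spaces and `δ > 0`, then there exists `L = L(δ)` such that for every
strongly measurable `f : 𝕋 → X` with `‖f t‖ ≤ 1` a.e., the set of `k ∈ ℤ` with
`‖(P∘f)^(k)‖ ≥ δ` has at most `L` elements. -/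
theorem stmt3 {X Y : Type*} [NormedAddCommGroup X] [NormedSpace ℂ X] [CompleteSpace X]
    [NormedAddCommGroup Y] [NormedSpace ℂ Y] [CompleteSpace Y]
    (l : ℕ) (hl : 1 ≤ l)
    (M : ContinuousMultilinearMap ℂ (fun _ : Fin l => X) Y)
    (P : X → Y) (hP : ∀ x, P x = M (fun _ => x))
    (hPcomp : IsCompact (closure (P '' Metric.closedBall 0 1)))
    (δ : ℝ) (hδ : 0 < δ) :
    ∃ L : ℕ, ∀ f : ℝ → X,
      AEStronglyMeasurable f (volume.restrict (Set.Ioc (0:ℝ) (2 * Real.pi))) →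
      (∀ᵐ t ∂(volume.restrict (Set.Ioc (0:ℝ) (2 * Real.pi))), ‖f t‖ ≤ 1) →
      {k : ℤ | δ ≤
          ‖(2 * Real.pi : ℂ)⁻¹ •
              ∫ t in (0:ℝ)..(2 * Real.pi),
                Complex.exp (-Complex.I * (k : ℂ) * (t : ℂ)) • P (f t)‖}.Finite ∧
        {k : ℤ | δ ≤
          ‖(2 * Real.pi : ℂ)⁻¹ •
              ∫ t in (0:ℝ)..(2 * Real.pi),
                Complex.exp (-Complex.I * (k : ℂ) * (t : ℂ)) • P (f t)‖}.ncard ≤ L := by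
  classical
  have hπ : (0:ℝ) < 2 * Real.pi := by positivity
  haveI : Fact (0 < 2 * Real.pi) := ⟨hπ⟩
  borelize Y
  have hPcont : Continuous P := by
    have hPe : P = fun x => M (fun _ => x) := funext hP
    rw [hPe]
    exact M.coe_continuous.comp (continuous_pi fun _ => continuous_id)
  set K := closure (P '' Metric.closedBall 0 1) with hKdef
  obtain ⟨R, hR⟩ := (Metric.isBounded_iff_subset_closedBall 0).mp hPcomp.isBounded
  set R₀ : ℝ := max R 1 with hR₀def
  have hR₀1 : (1:ℝ) ≤ R₀ := le_max_right _ _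
  have hR₀0 : (0:ℝ) < R₀ := lt_of_lt_of_le one_pos hR₀1
  have hKR : ∀ y ∈ K, ‖y‖ ≤ R₀ := by
    intro y hy
    have := hR hy
    rw [Metric.mem_closedBall, dist_zero_right] at this
    exact this.trans (le_max_left _ _)
  have hδ4 : (0:ℝ) < δ / 4 := by positivity
  obtain ⟨S, hSK, hSfin, hScov⟩ := hPcomp.finite_cover_balls hδ4
  set n := hSfin.toFinset.card with hndef
  set s : Fin n → Y := fun j => ↑(hSfin.toFinset.equivFin.symm j) with hsdef
  have hsK : ∀ j, s j ∈ K := by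
    intro j
    exact hSK (hSfin.mem_toFinset.mp (hSfin.toFinset.equivFin.symm j).2)
  have hcov' : ∀ y ∈ K, ∃ j, y ∈ Metric.ball (s j) (δ/4) := by
    intro y hy
    obtain ⟨x, hxS, hxy⟩ := Set.mem_iUnion₂.mp (hScov hy)
    refine ⟨hSfin.toFinset.equivFin ⟨x, hSfin.mem_toFinset.mpr hxS⟩, ?_⟩
    have : s (hSfin.toFinset.equivFin ⟨x, hSfin.mem_toFinset.mpr hxS⟩) = x := by
      rw [hsdef]
      simp
    rwa [this]
  have hm' : (0:ℝ) < (n:ℝ) + 1 := by positivity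
  set η : ℝ := δ / (4 * ((n:ℝ) + 1) * R₀) with hηdef
  have hηpos : 0 < η := by
    apply div_pos hδ
    have := hR₀0
    nlinarith
  set N := ⌈(1:ℝ) / η ^ 2⌉₊ with hNdef
  refine ⟨(n + 1) * N, ?_⟩
  intro f hf1 hf2
  set μ := volume.restrict (Set.Ioc (0:ℝ) (2 * Real.pi)) with hμdef
  haveI : IsFiniteMeasure μ := by
    constructor
    rw [hμdef, Measure.restrict_apply_univ, Real.volume_Ioc]
    exact ENNReal.ofReal_lt_top
  have hFm : AEStronglyMeasurable (fun t => P (f t)) μ := hPcont.comp_aestronglyMeasurable hf1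
  set F' := hFm.mk _ with hF'def
  have hF'sm : StronglyMeasurable F' := hFm.stronglyMeasurable_mk
  have hF'meas : Measurable F' := hF'sm.measurable
  have hF'ae : (fun t => P (f t)) =ᵐ[μ] F' := hFm.ae_eq_mk
  have hF'K : ∀ᵐ t ∂μ, F' t ∈ K := by
    filter_upwards [hf2, hF'ae] with t h1 h2
    rw [← h2]
    exact subset_closure ⟨f t, by simpa [Metric.mem_closedBall, dist_zero_right] using h1, rfl⟩
  set A : Fin n → Set ℝ := fun j =>
    F' ⁻¹' Metric.ball (s j) (δ/4) \
      ⋃ i : Fin n, ⋃ (_ : i < j), F' ⁻¹' Metric.ball (s i) (δ/4) with hAdef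
  have hAmeas : ∀ j, MeasurableSet (A j) := fun j =>
    (hF'meas measurableSet_ball).diff
      (MeasurableSet.iUnion fun i => MeasurableSet.iUnion fun _ =>
        hF'meas measurableSet_ball)
  have hAdisj : ∀ t (i j : Fin n), t ∈ A i → t ∈ A j → i = j := by
    intro t i j hi hj
    by_contra hne
    rcases lt_or_gt_of_ne hne with h | h
    · exact hj.2 (Set.mem_iUnion.mpr ⟨i, Set.mem_iUnion.mpr ⟨h, hi.1⟩⟩)
    · exact hi.2 (Set.mem_iUnion.mpr ⟨j, Set.mem_iUnion.mpr ⟨h, hj.1⟩⟩)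
  set g : ℝ → Y := fun t => ∑ j : Fin n, (A j).indicator (fun _ => s j) t with hgdef
  have hgval : ∀ t j, t ∈ A j → g t = s j := by
    intro t j hj
    show (∑ i : Fin n, (A i).indicator (fun _ => s i) t) = s j
    rw [Finset.sum_eq_single j]
    · simp [Set.indicator_of_mem hj]
    · intro i _ hne
      exact Set.indicator_of_notMem (fun hti => hne (hAdisj t i j hti hj)) _
    · simp
  have hgbd : ∀ t, ‖g t‖ ≤ R₀ := by
    intro t
    by_cases h : ∃ j, t ∈ A j
    · obtain ⟨j, hj⟩ := h
      rw [hgval t j hj]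
      exact hKR _ (hsK j)
    · push_neg at h
      have hz : g t = 0 := by
        show (∑ i : Fin n, (A i).indicator (fun _ => s i) t) = 0
        exact Finset.sum_eq_zero fun j _ => Set.indicator_of_notMem (h j) _
      rw [hz, norm_zero]
      exact hR₀0.le
  have hgsm : StronglyMeasurable g :=
    Finset.stronglyMeasurable_fun_sum _ fun j _ => stronglyMeasurable_const.indicator (hAmeas j)
  have hclose : ∀ᵐ t ∂μ, ‖F' t - g t‖ ≤ δ / 4 := by
    filter_upwards [hF'K] with t ht
    obtain ⟨j, hj⟩ := hcov' _ ht
    have hQ : (Finset.univ.filter (fun i : Fin n => F' t ∈ Metric.ball (s i) (δ/4))).Nonempty :=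
      ⟨j, by simp only [Finset.mem_filter, Finset.mem_univ, true_and]; exact hj⟩
    set j₀ := Finset.min' _ hQ with hj₀def
    have hj₀mem := Finset.min'_mem _ hQ
    rw [Finset.mem_filter] at hj₀mem
    have htA : t ∈ A j₀ := by
      refine ⟨hj₀mem.2, ?_⟩
      intro hmem
      obtain ⟨i, hi⟩ := Set.mem_iUnion.mp hmem
      obtain ⟨hlt, hti⟩ := Set.mem_iUnion.mp hi
      have hle : j₀ ≤ i := Finset.min'_le _ _ (by simp only [Finset.mem_filter, Finset.mem_univ, true_and]; exact hti)
      exact absurd hlt (not_lt.mpr hle)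
    rw [hgval t j₀ htA]
    have h2 := hj₀mem.2
    rw [Metric.mem_ball, dist_eq_norm] at h2
    exact h2.le
  -- the scalar indicator functions on the circle
  set w : Fin n → ℝ → ℂ := fun j => (A j).indicator (fun _ => (1:ℂ)) with hwdef
  have hwmeas : ∀ j, Measurable (w j) := fun j => measurable_const.indicator (hAmeas j)
  have hwbd : ∀ j t, ‖w j t‖ ≤ 1 := by
    intro j t
    rw [hwdef]
    by_cases h : t ∈ A j
    · simp [Set.indicator_of_mem h]
    · simp [Set.indicator_of_notMem h]
  set u : Fin n → AddCircle (2 * Real.pi) → ℂ :=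
    fun j => AddCircle.liftIoc (2 * Real.pi) 0 (w j) with hudef
  have hubd : ∀ j x, ‖u j x‖ ≤ 1 := fun j x => hwbd j _
  have hbesselj : ∀ j, Summable (fun k : ℤ => ‖fourierCoeff (u j) k‖ ^ 2) ∧
      ∑' k : ℤ, ‖fourierCoeff (u j) k‖ ^ 2 ≤ 1 :=
    fun j => bessel _ (meas_liftIoc _ (hwmeas j)) (hubd j)
  have hcount : ∀ j, {k : ℤ | η ≤ ‖fourierCoeff (u j) k‖}.Finite ∧
      {k : ℤ | η ≤ ‖fourierCoeff (u j) k‖}.ncard ≤ ⌈(1:ℝ) / η ^ 2⌉₊ :=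
    fun j => count_large _ (hbesselj j).1 1 (hbesselj j).2 hηpos
  -- the key pointwise claim
  have hkey : ∀ k : ℤ, δ ≤
      ‖(2 * Real.pi : ℂ)⁻¹ •
          ∫ t in (0:ℝ)..(2 * Real.pi),
            Complex.exp (-Complex.I * (k : ℂ) * (t : ℂ)) • P (f t)‖ →
      ∃ j, η ≤ ‖fourierCoeff (u j) k‖ := by
    intro k hk
    have hecont : Continuous fun t : ℝ => Complex.exp (-Complex.I * (k : ℂ) * (t : ℂ)) := by
      fun_prop
    have henorm : ∀ t : ℝ, ‖Complex.exp (-Complex.I * (k : ℂ) * (t : ℂ))‖ = 1 := by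
      intro t
      have hre : (-Complex.I * (k : ℂ) * (t : ℂ)).re = 0 := by simp
      rw [Complex.norm_exp, hre, Real.exp_zero]
    have hintg : IntervalIntegrable
        (fun t : ℝ => Complex.exp (-Complex.I * (k : ℂ) * (t : ℂ)) • g t) volume 0 (2 * Real.pi) := by
      rw [intervalIntegrable_iff, Set.uIoc_of_le hπ.le]
      apply (integrable_const R₀).mono'
        (hecont.aestronglyMeasurable.smul hgsm.aestronglyMeasurable)
      filter_upwards with t
      rw [Pi.smul_apply', norm_smul, henorm, one_mul]
      exact hgbd t
    have hintd : IntervalIntegrable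
        (fun t : ℝ => Complex.exp (-Complex.I * (k : ℂ) * (t : ℂ)) • (F' t - g t))
        volume 0 (2 * Real.pi) := by
      rw [intervalIntegrable_iff, Set.uIoc_of_le hπ.le]
      apply (integrable_const (δ/4)).mono'
        (hecont.aestronglyMeasurable.smul (hF'sm.sub hgsm).aestronglyMeasurable)
      filter_upwards [hclose] with t ht
      rw [Pi.smul_apply', norm_smul, henorm, one_mul]
      exact ht
    have h1 : ∫ t in (0:ℝ)..(2 * Real.pi),
        Complex.exp (-Complex.I * (k : ℂ) * (t : ℂ)) • P (f t) =
        ∫ t in (0:ℝ)..(2 * Real.pi),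
        Complex.exp (-Complex.I * (k : ℂ) * (t : ℂ)) • F' t := by
      apply intervalIntegral.integral_congr_ae
      rw [Set.uIoc_of_le hπ.le]
      have hae := (ae_restrict_iff' measurableSet_Ioc).mp hF'ae
      filter_upwards [hae] with t ht hmem
      rw [ht hmem]
    have hintwj : ∀ j, IntervalIntegrable
        (fun t => (w j t * Complex.exp (-Complex.I * (k : ℂ) * (t : ℂ))) • s j)
        volume 0 (2 * Real.pi) := by
      intro j
      rw [intervalIntegrable_iff, Set.uIoc_of_le hπ.le]
      apply (integrable_const R₀).mono'
        ((((hwmeas j).stronglyMeasurable.mul hecont.stronglyMeasurable).smul_const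
          (s j)).aestronglyMeasurable)
      filter_upwards with t
      simp only [Pi.mul_apply, norm_smul, norm_mul, henorm, mul_one]
      calc ‖w j t‖ * ‖s j‖ ≤ 1 * R₀ :=
            mul_le_mul (hwbd j t) (hKR _ (hsK j)) (norm_nonneg _) zero_le_one
        _ = R₀ := one_mul _
    have hfc : ∀ j, fourierCoeff (u j) k = (2 * Real.pi : ℂ)⁻¹ *
        ∫ t in (0:ℝ)..(2 * Real.pi), w j t * Complex.exp (-Complex.I * (k : ℂ) * (t : ℂ)) :=
      fun j => fourierCoeff_liftIoc (w j) k
    have hmain : (2 * Real.pi : ℂ)⁻¹ •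
        ∫ t in (0:ℝ)..(2 * Real.pi), Complex.exp (-Complex.I * (k : ℂ) * (t : ℂ)) • g t =
        ∑ j : Fin n, fourierCoeff (u j) k • s j := by
      have hgt : (fun t : ℝ => Complex.exp (-Complex.I * (k : ℂ) * (t : ℂ)) • g t) =
          fun t => ∑ j : Fin n,
            (w j t * Complex.exp (-Complex.I * (k : ℂ) * (t : ℂ))) • s j := by
        funext t
        show Complex.exp (-Complex.I * (k : ℂ) * (t : ℂ)) •
            (∑ i : Fin n, (A i).indicator (fun _ => s i) t) = _
        rw [Finset.smul_sum]
        apply Finset.sum_congr rfl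
        intro j _
        by_cases h : t ∈ A j
        · rw [hwdef]
          simp only [Set.indicator_of_mem h, one_mul]
        · rw [hwdef]
          simp only [Set.indicator_of_notMem h, zero_mul, zero_smul, smul_zero]
      rw [hgt, intervalIntegral.integral_finset_sum (fun j _ => hintwj j)]
      rw [Finset.smul_sum]
      apply Finset.sum_congr rfl
      intro j _
      rw [intervalIntegral.integral_smul_const, smul_smul, hfc j]
    have hsplit2 : ∫ t in (0:ℝ)..(2 * Real.pi),
        Complex.exp (-Complex.I * (k : ℂ) * (t : ℂ)) • F' t =
        (∫ t in (0:ℝ)..(2 * Real.pi),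
          Complex.exp (-Complex.I * (k : ℂ) * (t : ℂ)) • g t) +
        ∫ t in (0:ℝ)..(2 * Real.pi),
          Complex.exp (-Complex.I * (k : ℂ) * (t : ℂ)) • (F' t - g t) := by
      rw [← intervalIntegral.integral_add hintg hintd]
      apply intervalIntegral.integral_congr
      intro t _
      show Complex.exp (-Complex.I * (k : ℂ) * (t : ℂ)) • F' t =
        Complex.exp (-Complex.I * (k : ℂ) * (t : ℂ)) • g t +
          Complex.exp (-Complex.I * (k : ℂ) * (t : ℂ)) • (F' t - g t)
      rw [← smul_add, add_sub_cancel]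
    have hnc : ‖(2 * Real.pi : ℂ)⁻¹‖ = (2 * Real.pi)⁻¹ := by
      rw [norm_inv]
      have hcast : (2 * Real.pi : ℂ) = ((2 * Real.pi : ℝ) : ℂ) := by push_cast; ring
      rw [hcast, Complex.norm_real, Real.norm_eq_abs, abs_of_pos hπ]
    have herr : ‖(2 * Real.pi : ℂ)⁻¹ •
        ∫ t in (0:ℝ)..(2 * Real.pi),
          Complex.exp (-Complex.I * (k : ℂ) * (t : ℂ)) • (F' t - g t)‖ ≤ δ / 4 := by
      rw [norm_smul, hnc]
      have hdint : Integrable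
          (fun t : ℝ => Complex.exp (-Complex.I * (k : ℂ) * (t : ℂ)) • (F' t - g t)) μ := by
        have := hintd
        rwa [intervalIntegrable_iff, Set.uIoc_of_le hπ.le] at this
      have hb : ‖∫ t in (0:ℝ)..(2 * Real.pi),
          Complex.exp (-Complex.I * (k : ℂ) * (t : ℂ)) • (F' t - g t)‖ ≤ (δ/4) * (2 * Real.pi) := by
        rw [intervalIntegral.integral_of_le hπ.le]
        calc ‖∫ t in Set.Ioc (0:ℝ) (2 * Real.pi),
              Complex.exp (-Complex.I * (k : ℂ) * (t : ℂ)) • (F' t - g t) ∂volume‖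
            ≤ ∫ t in Set.Ioc (0:ℝ) (2 * Real.pi),
              ‖Complex.exp (-Complex.I * (k : ℂ) * (t : ℂ)) • (F' t - g t)‖ ∂volume :=
              norm_integral_le_integral_norm _
          _ ≤ ∫ _t in Set.Ioc (0:ℝ) (2 * Real.pi), (δ/4) ∂volume := by
              apply integral_mono_ae hdint.norm (integrable_const _)
              filter_upwards [hclose] with t ht
              rw [norm_smul, henorm, one_mul]
              exact ht
          _ = (δ/4) * (2 * Real.pi) := by
              rw [setIntegral_const, measureReal_def, Real.volume_Ioc, smul_eq_mul,
                ENNReal.toReal_ofReal (by linarith [Real.pi_pos])]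
              ring
      calc (2 * Real.pi)⁻¹ * ‖∫ t in (0:ℝ)..(2 * Real.pi),
            Complex.exp (-Complex.I * (k : ℂ) * (t : ℂ)) • (F' t - g t)‖
          ≤ (2 * Real.pi)⁻¹ * ((δ/4) * (2 * Real.pi)) := by
            apply mul_le_mul_of_nonneg_left hb (by positivity)
        _ = δ/4 := by field_simp
    have hnorm_main : ‖∑ j : Fin n, fourierCoeff (u j) k • s j‖ ≤
        ∑ j : Fin n, ‖fourierCoeff (u j) k‖ * R₀ := by
      calc ‖∑ j : Fin n, fourierCoeff (u j) k • s j‖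
          ≤ ∑ j : Fin n, ‖fourierCoeff (u j) k • s j‖ := norm_sum_le _ _
        _ ≤ ∑ j : Fin n, ‖fourierCoeff (u j) k‖ * R₀ := by
            apply Finset.sum_le_sum
            intro j _
            rw [norm_smul]
            exact mul_le_mul_of_nonneg_left (hKR _ (hsK j)) (norm_nonneg _)
    by_contra hcon
    push_neg at hcon
    have hsum_le : ∑ j : Fin n, ‖fourierCoeff (u j) k‖ * R₀ ≤ (n:ℝ) * (η * R₀) := by
      calc ∑ j : Fin n, ‖fourierCoeff (u j) k‖ * R₀ ≤ ∑ _j : Fin n, η * R₀ :=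
            Finset.sum_le_sum fun j _ =>
              mul_le_mul_of_nonneg_right (hcon j).le hR₀0.le
        _ = (n:ℝ) * (η * R₀) := by
            rw [Finset.sum_const, Finset.card_univ, Fintype.card_fin, nsmul_eq_mul]
    have hηR : η * R₀ = δ / (4 * ((n:ℝ) + 1)) := by
      rw [hηdef]; exact aux_eta δ R₀ (4 * ((n:ℝ) + 1)) (ne_of_gt hR₀0)
    have hb2 : (n:ℝ) * (δ / (4 * ((n:ℝ) + 1))) ≤ δ/4 :=
      aux_b2 δ (n:ℝ) hδ.le (Nat.cast_nonneg n)
    have hfinal : δ ≤ δ/4 + δ/4 := by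
      calc δ ≤ ‖(2 * Real.pi : ℂ)⁻¹ •
            ∫ t in (0:ℝ)..(2 * Real.pi),
              Complex.exp (-Complex.I * (k : ℂ) * (t : ℂ)) • P (f t)‖ := hk
        _ = ‖(∑ j : Fin n, fourierCoeff (u j) k • s j) + (2 * Real.pi : ℂ)⁻¹ •
            ∫ t in (0:ℝ)..(2 * Real.pi),
              Complex.exp (-Complex.I * (k : ℂ) * (t : ℂ)) • (F' t - g t)‖ := by
            rw [h1, hsplit2, smul_add, hmain]
        _ ≤ ‖∑ j : Fin n, fourierCoeff (u j) k • s j‖ + ‖(2 * Real.pi : ℂ)⁻¹ •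
            ∫ t in (0:ℝ)..(2 * Real.pi),
              Complex.exp (-Complex.I * (k : ℂ) * (t : ℂ)) • (F' t - g t)‖ := norm_add_le _ _
        _ ≤ δ/4 + δ/4 := by
            apply add_le_add _ herr
            calc ‖∑ j : Fin n, fourierCoeff (u j) k • s j‖
                ≤ ∑ j : Fin n, ‖fourierCoeff (u j) k‖ * R₀ := hnorm_main
              _ ≤ (n:ℝ) * (η * R₀) := hsum_le
              _ ≤ δ/4 := by rw [hηR]; exact hb2
    linarith
  -- conclusion
  set Ft : Finset ℤ := Finset.univ.biUnion (fun j : Fin n => (hcount j).1.toFinset) with hFtdef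
  have hsub : {k : ℤ | δ ≤
      ‖(2 * Real.pi : ℂ)⁻¹ •
          ∫ t in (0:ℝ)..(2 * Real.pi),
            Complex.exp (-Complex.I * (k : ℂ) * (t : ℂ)) • P (f t)‖} ⊆ ↑Ft := by
    intro k hk
    obtain ⟨j, hj⟩ := hkey k hk
    suffices hmem : k ∈ Ft from hmem
    rw [hFtdef]
    refine Finset.mem_biUnion.mpr ⟨j, Finset.mem_univ _, ?_⟩
    exact (Set.Finite.mem_toFinset _).mpr hj
  constructor
  · exact Set.Finite.subset Ft.finite_toSet hsub
  · calc ({k : ℤ | δ ≤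
        ‖(2 * Real.pi : ℂ)⁻¹ •
            ∫ t in (0:ℝ)..(2 * Real.pi),
              Complex.exp (-Complex.I * (k : ℂ) * (t : ℂ)) • P (f t)‖}).ncard
        ≤ (↑Ft : Set ℤ).ncard := Set.ncard_le_ncard hsub Ft.finite_toSet
      _ = Ft.card := Set.ncard_coe_finset _
      _ ≤ ∑ j : Fin n, ((hcount j).1.toFinset).card := Finset.card_biUnion_le
      _ ≤ ∑ _j : Fin n, N := Finset.sum_le_sum fun j _ => by
            rw [← Set.ncard_eq_toFinset_card _ (hcount j).1]
            exact (hcount j).2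
      _ = n * N := by rw [Finset.sum_const, Finset.card_univ, Fintype.card_fin, smul_eq_mul]
      _ ≤ (n + 1) * N := Nat.mul_le_mul_right _ (Nat.le_succ n)
end

section
/- Let X and Y be complex Banach spaces, let l ≥ 1, and let P : X → Y be a compact continuous l-homogeneous polynomial with polar P̃. Fix k ≥ 1. For j = 1, …, l let (f_n^{(j)})_{n≥1} be sequences of strongly measurable functions 𝕋 → X with ‖f_n^{(j)}(t)‖_X ≤ 1 for almost every t and every n. If for every functional y* in the closed unit ball of Y* one has lim_{n→∞} ∫₀^{2π} |y*(P̃(f_n^{(1)}(t), …, f_n^{(l)}(t)))|^k dt = 0, then lim_{n→∞} ∫₀^{2π} ‖P̃(f_n^{(1)}(t), …, f_n^{(l)}(t))‖_Y^k dt = 0. -/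
open MeasureTheory Filter Finset Set Metric


noncomputable def csign (b : Bool) : ℂ := if b then 1 else -1

lemma csign_norm (b : Bool) : ‖csign b‖ = 1 := by cases b <;> simp [csign]

lemma csign_sq (b : Bool) : csign b * csign b = 1 := by cases b <;> simp [csign]

lemma sum_csign_pow (m : ℕ) : ∑ b : Bool, csign b ^ m = 1 + (-1 : ℂ) ^ m := by
  simp [Fintype.sum_bool, csign]

lemma coeff_sum (l : ℕ) (g : Fin l → Fin l) :
    ∑ ε : Fin l → Bool, (∏ j, csign (ε j)) * ∏ i, csign (ε (g i)) =
      if Function.Bijective g then (2 : ℂ) ^ l else 0 := by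
  classical
  have h1 : ∀ ε : Fin l → Bool, (∏ j, csign (ε j)) * ∏ i, csign (ε (g i)) =
      ∏ j, csign (ε j) ^ (1 + #{i ∈ (univ : Finset (Fin l)) | g i = j}) := by
    intro ε
    rw [← Finset.prod_fiberwise' (univ : Finset (Fin l)) g (fun j => csign (ε j)),
      ← Finset.prod_mul_distrib]
    refine Finset.prod_congr rfl fun j _ => ?_
    rw [Finset.prod_const, pow_add, pow_one]
  simp_rw [h1]
  rw [← Fintype.prod_sum (fun j b => csign b ^ (1 + #{i ∈ (univ : Finset (Fin l)) | g i = j}))]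
  simp_rw [sum_csign_pow]
  by_cases hg : Function.Bijective g
  · rw [if_pos hg]
    have hcard : ∀ j, #{i ∈ (univ : Finset (Fin l)) | g i = j} = 1 := by
      intro j
      rw [Finset.card_eq_one]
      refine ⟨(Equiv.ofBijective g hg).symm j, ?_⟩
      ext i
      simp only [Finset.mem_filter, Finset.mem_univ, true_and, Finset.mem_singleton]
      constructor
      · intro h; rw [← h, ← Equiv.ofBijective_apply g hg, Equiv.symm_apply_apply]
      · intro h; rw [h, ← Equiv.ofBijective_apply g hg, Equiv.apply_symm_apply]
    simp only [hcard]
    norm_num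
  · rw [if_neg hg]
    have : ¬ Function.Surjective g := fun hs => hg (Finite.surjective_iff_bijective.mp hs)
    obtain ⟨j, hj⟩ : ∃ j, ∀ i, g i ≠ j := by
      simpa [Function.Surjective, not_forall] using this
    refine Finset.prod_eq_zero (Finset.mem_univ j) ?_
    have : #{i ∈ (univ : Finset (Fin l)) | g i = j} = 0 := by
      simp only [Finset.card_eq_zero]; ext i; simp [hj i]
    rw [this]; norm_num
lemma polarization {X Y : Type*} [NormedAddCommGroup X] [NormedSpace ℂ X]
    [NormedAddCommGroup Y] [NormedSpace ℂ Y] {l : ℕ}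
    (M : ContinuousMultilinearMap ℂ (fun _ : Fin l => X) Y)
    (hsymm : ∀ (v : Fin l → X) (σ : Equiv.Perm (Fin l)), M (v ∘ σ) = M v)
    (x : Fin l → X) :
    ∑ ε : Fin l → Bool, (∏ j, csign (ε j)) • M (fun _ => ∑ j, csign (ε j) • x j) =
      ((2 : ℂ) ^ l *
        (#{g ∈ (univ : Finset (Fin l → Fin l)) | Function.Bijective g} : ℕ)) • M x := by
  classical
  have expand : ∀ ε : Fin l → Bool, M (fun _ : Fin l => ∑ j, csign (ε j) • x j) =
      ∑ g : Fin l → Fin l, (∏ i, csign (ε (g i))) • M (fun i => x (g i)) := by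
    intro ε
    rw [M.map_sum (g := fun (_ : Fin l) (j : Fin l) => csign (ε j) • x j)]
    exact Finset.sum_congr rfl fun g _ =>
      M.map_smul_univ (fun i => csign (ε (g i))) (fun i => x (g i))
  simp_rw [expand, Finset.smul_sum, smul_smul]
  rw [Finset.sum_comm]
  have step : ∀ g : Fin l → Fin l,
      ∑ ε : Fin l → Bool, ((∏ j, csign (ε j)) * ∏ i, csign (ε (g i))) • M (fun i => x (g i)) =
      (if Function.Bijective g then ((2:ℂ)^l) • M (fun i => x (g i)) else 0) := by
    intro g
    rw [← Finset.sum_smul, coeff_sum, ite_smul, zero_smul]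
  rw [Finset.sum_congr rfl fun g _ => step g, ← Finset.sum_filter]
  have hval : ∀ g ∈ {g ∈ (univ : Finset (Fin l → Fin l)) | Function.Bijective g},
      ((2:ℂ)^l) • M (fun i => x (g i)) = ((2:ℂ)^l) • M x := by
    intro g hg
    have hb : Function.Bijective g := (Finset.mem_filter.mp hg).2
    congr 1
    have := hsymm x (Equiv.ofBijective g hb)
    simpa [Function.comp_def] using this
  rw [Finset.sum_congr rfl hval, Finset.sum_const, ← Nat.cast_smul_eq_nsmul ℂ, smul_smul,
    mul_comm]


set_option synthInstance.maxHeartbeats 1000000 in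
lemma sm_multilinear {α : Type*} [MeasurableSpace α] {X Y : Type*}
    [NormedAddCommGroup X] [NormedSpace ℂ X] [NormedAddCommGroup Y] [NormedSpace ℂ Y]
    {l : ℕ} (M : ContinuousMultilinearMap ℂ (fun _ : Fin l => X) Y)
    {g : Fin l → α → X} (hg : ∀ j, StronglyMeasurable (g j)) :
    StronglyMeasurable (fun t => M (fun j => g j t)) := by
  letI : MeasurableSpace X := borel X
  haveI : BorelSpace X := ⟨rfl⟩
  set C : Fin l → Set X := fun j => closure (Set.range (g j)) with hC
  have hsep : ∀ j, TopologicalSpace.IsSeparable (C j) := fun j =>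
    (hg j).isSeparable_range.closure
  haveI : ∀ j, SecondCountableTopology (C j) := fun j =>
    (hsep j).secondCountableTopology
  have hmem : ∀ j t, g j t ∈ C j := fun j t => subset_closure (Set.mem_range_self t)
  set h : α → (∀ j : Fin l, C j) := fun t j => ⟨g j t, hmem j t⟩ with hh
  have hmeas : Measurable h := by
    apply measurable_pi_lambda
    intro j
    exact ((hg j).measurable).subtype_mk
  have hsm : StronglyMeasurable h := hmeas.stronglyMeasurable
  have hcont : Continuous (fun y : (∀ j : Fin l, C j) => M (fun j => (y j : X))) :=
    M.cont.comp (continuous_pi fun j => continuous_subtype_val.comp (continuous_apply j))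
  exact hcont.comp_stronglyMeasurable hsm

lemma aesm_multilinear {α : Type*} [MeasurableSpace α] {μ : MeasureTheory.Measure α}
    {X Y : Type*}
    [NormedAddCommGroup X] [NormedSpace ℂ X] [NormedAddCommGroup Y] [NormedSpace ℂ Y]
    {l : ℕ} (M : ContinuousMultilinearMap ℂ (fun _ : Fin l => X) Y)
    {g : Fin l → α → X} (hg : ∀ j, AEStronglyMeasurable (g j) μ) :
    AEStronglyMeasurable (fun t => M (fun j => g j t)) μ := by
  refine ⟨fun t => M (fun j => (hg j).mk _ t), sm_multilinear M fun j => (hg j).stronglyMeasurable_mk, ?_⟩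
  have : ∀ᵐ t ∂μ, ∀ j, g j t = (hg j).mk _ t := by
    rw [MeasureTheory.ae_all_iff]; exact fun j => (hg j).ae_eq_mk
  filter_upwards [this] with t ht
  simp only [funext ht]

lemma norm_net {Y : Type*} [NormedAddCommGroup Y] [NormedSpace ℂ Y]
    {K : Set Y} (hK : IsCompact K) {δ : ℝ} (hδ : 0 < δ) :
    ∃ s : Finset (Y →L[ℂ] ℂ), (∀ φ ∈ s, ‖φ‖ ≤ 1) ∧
      ∀ y ∈ K, ∃ φ ∈ s, ‖y‖ ≤ ‖φ y‖ + δ := by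
  classical
  obtain ⟨t, hts, htfin, hcov⟩ := hK.finite_cover_balls (half_pos hδ)
  set ψ : Y → (Y →L[ℂ] ℂ) := fun y => Classical.choose (exists_dual_vector'' ℂ y) with hψ
  have hψ1 : ∀ y, ‖ψ y‖ ≤ 1 := fun y => (Classical.choose_spec (exists_dual_vector'' ℂ y)).1
  have hψ2 : ∀ y, (ψ y) y = (‖y‖ : ℂ) := fun y => (Classical.choose_spec (exists_dual_vector'' ℂ y)).2
  refine ⟨htfin.toFinset.image ψ, ?_, ?_⟩
  · intro φ hφ
    simp only [Finset.mem_image] at hφ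
    obtain ⟨y, _, rfl⟩ := hφ
    exact hψ1 y
  · intro y hy
    obtain ⟨c, hc, hyc⟩ := Set.mem_iUnion₂.mp (hcov hy)
    refine ⟨ψ c, Finset.mem_image_of_mem _ (htfin.mem_toFinset.mpr hc), ?_⟩
    have h1 : ‖y‖ ≤ ‖c‖ + δ / 2 := by
      have hyc2 : ‖y - c‖ < δ / 2 := by
        rw [← dist_eq_norm]; exact mem_ball.mp hyc
      calc ‖y‖ = ‖c + (y - c)‖ := by rw [add_sub_cancel]
        _ ≤ ‖c‖ + ‖y - c‖ := norm_add_le _ _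
        _ ≤ ‖c‖ + δ / 2 := by linarith
    have h2 : ‖c‖ = ‖(ψ c) c‖ := by rw [hψ2]; simp
    have h3 : ‖(ψ c) c‖ ≤ ‖(ψ c) y‖ + δ / 2 := by
      have : ‖(ψ c) c - (ψ c) y‖ ≤ ‖c - y‖ := by
        rw [← map_sub]
        calc ‖(ψ c) (c - y)‖ ≤ ‖ψ c‖ * ‖c - y‖ := (ψ c).le_opNorm _
          _ ≤ 1 * ‖c - y‖ := by
              apply mul_le_mul_of_nonneg_right (hψ1 c) (norm_nonneg _)
          _ = ‖c - y‖ := one_mul _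
      have h4 : ‖c - y‖ < δ / 2 := by
        rw [← dist_eq_norm, dist_comm]; exact mem_ball.mp hyc
      calc ‖(ψ c) c‖ ≤ ‖(ψ c) y‖ + ‖(ψ c) c - (ψ c) y‖ := by
            have := norm_sub_norm_le ((ψ c) c) ((ψ c) y)
            linarith [abs_le.mp (abs_norm_sub_norm_le ((ψ c) c) ((ψ c) y))]
        _ ≤ ‖(ψ c) y‖ + δ / 2 := by linarith
    linarith

lemma pow_estimate {k : ℕ} (hk : 1 ≤ k) {a b C δ : ℝ} (ha : 0 ≤ a) (hb : 0 ≤ b)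
    (haC : a ≤ C) (hbC : b ≤ C) (hab : a ≤ b + δ) (hδ : 0 ≤ δ) :
    a ^ k ≤ b ^ k + k * C ^ (k - 1) * δ := by
  have hC : 0 ≤ C := le_trans ha haC
  rcases le_total a b with h | h
  · have : a ^ k ≤ b ^ k := pow_le_pow_left₀ ha h k
    have : 0 ≤ (k : ℝ) * C ^ (k - 1) * δ := by positivity
    linarith [pow_le_pow_left₀ ha h k]
  · have key : a ^ k - b ^ k = (∑ i ∈ Finset.range k, a ^ i * b ^ (k - 1 - i)) * (a - b) :=
      (geom_sum₂_mul a b k).symm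
    have hsum : (∑ i ∈ Finset.range k, a ^ i * b ^ (k - 1 - i)) ≤ k * C ^ (k - 1) := by
      calc (∑ i ∈ Finset.range k, a ^ i * b ^ (k - 1 - i))
          ≤ ∑ _i ∈ Finset.range k, C ^ (k - 1) := by
            apply Finset.sum_le_sum
            intro i hi
            have hik : i ≤ k - 1 := Nat.le_sub_one_of_lt (Finset.mem_range.mp hi)
            calc a ^ i * b ^ (k - 1 - i) ≤ C ^ i * C ^ (k - 1 - i) := by
                  apply mul_le_mul (pow_le_pow_left₀ ha haC i) (pow_le_pow_left₀ hb hbC _)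
                    (by positivity) (by positivity)
              _ = C ^ (k - 1) := by rw [← pow_add]; congr 1; omega
        _ = k * C ^ (k - 1) := by rw [Finset.sum_const, Finset.card_range, nsmul_eq_mul]
    have hfac : 0 ≤ (∑ i ∈ Finset.range k, a ^ i * b ^ (k - 1 - i)) := by
      apply Finset.sum_nonneg; intro i _; positivity
    have : a ^ k - b ^ k ≤ (k * C ^ (k - 1)) * δ := by
      rw [key]
      apply mul_le_mul hsum (by linarith) (by linarith) (by positivity)
    linarith
lemma exists_compact_absorbing {X Y : Type*} [NormedAddCommGroup X] [NormedSpace ℂ X]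
    [NormedAddCommGroup Y] [NormedSpace ℂ Y] {l : ℕ} (hl : 1 ≤ l)
    (M : ContinuousMultilinearMap ℂ (fun _ : Fin l => X) Y)
    (hsymm : ∀ (v : Fin l → X) (σ : Equiv.Perm (Fin l)), M (v ∘ σ) = M v)
    (P : X → Y) (hP : ∀ x, P x = M (fun _ => x))
    (hPcomp : IsCompact (closure (P '' Metric.closedBall 0 1))) :
    ∃ K : Set Y, IsCompact K ∧ ∀ x : Fin l → X, (∀ j, ‖x j‖ ≤ 1) → M x ∈ K := by
  classical
  set Nc : ℕ := #{g ∈ (univ : Finset (Fin l → Fin l)) | Function.Bijective g} with hNc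
  have hNpos : 0 < Nc := by
    apply Finset.card_pos.mpr
    exact ⟨id, Finset.mem_filter.mpr ⟨Finset.mem_univ _, Function.bijective_id⟩⟩
  set c0 : ℂ := (2 : ℂ) ^ l * (Nc : ℕ) with hc0
  have hc0ne : c0 ≠ 0 := by
    apply mul_ne_zero (pow_ne_zero _ two_ne_zero)
    exact_mod_cast Nat.cast_ne_zero.mpr hNpos.ne'
  set c : (Fin l → Bool) → ℂ := fun ε => c0⁻¹ * (∏ j, csign (ε j)) * (l : ℂ) ^ l with hc
  set φ : ((Fin l → Bool) → Y) → Y := fun y => ∑ ε, c ε • y ε with hφ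
  have hφcont : Continuous φ := by
    apply continuous_finset_sum
    intro ε _
    exact (continuous_apply ε).const_smul (c ε)
  set Q : Set Y := closure (P '' Metric.closedBall 0 1) with hQ
  refine ⟨φ '' Set.univ.pi (fun _ => Q), (isCompact_univ_pi (fun _ => hPcomp)).image hφcont, ?_⟩
  intro x hx
  have hlne : ((l : ℂ)) ≠ 0 := by
    simp only [ne_eq, Nat.cast_eq_zero]; omega
  set z : (Fin l → Bool) → X := fun ε => ∑ j, csign (ε j) • x j with hz
  set w : (Fin l → Bool) → X := fun ε => ((l : ℂ)⁻¹) • z ε with hw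
  have hwQ : ∀ ε, P (w ε) ∈ Q := by
    intro ε
    apply subset_closure
    refine ⟨w ε, ?_, rfl⟩
    rw [Metric.mem_closedBall, dist_zero_right, hw]
    have hznorm : ‖z ε‖ ≤ l := by
      calc ‖z ε‖ ≤ ∑ j, ‖csign (ε j) • x j‖ := norm_sum_le _ _
        _ = ∑ j, ‖x j‖ := by
            refine Finset.sum_congr rfl fun j _ => ?_
            rw [norm_smul, csign_norm, one_mul]
        _ ≤ ∑ _j : Fin l, (1 : ℝ) := Finset.sum_le_sum fun j _ => hx j
        _ = l := by simp
    rw [norm_smul, norm_inv, Complex.norm_natCast]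
    rw [inv_mul_le_iff₀ (by exact_mod_cast Nat.pos_of_ne_zero (by omega))]
    simpa using hznorm
  have hPz : ∀ ε, P (z ε) = (l : ℂ) ^ l • P (w ε) := by
    intro ε
    rw [hP, hP]
    have hzw : z ε = (l : ℂ) • w ε := (smul_inv_smul₀ hlne (z ε)).symm
    rw [hzw]
    have := M.map_smul_univ (fun _ : Fin l => (l : ℂ)) (fun _ => w ε)
    simpa [Finset.prod_const] using this
  have key : φ (fun ε => P (w ε)) = M x := by
    have hsum : ∑ ε : Fin l → Bool, c ε • P (w ε)
        = c0⁻¹ • ∑ ε : Fin l → Bool, (∏ j, csign (ε j)) • P (z ε) := by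
      rw [Finset.smul_sum]
      refine Finset.sum_congr rfl fun ε _ => ?_
      rw [hPz ε, hc]
      simp only [smul_smul]
      ring_nf
    rw [hφ]
    simp only
    rw [hsum]
    have hpol := polarization M hsymm x
    have : ∑ ε : Fin l → Bool, (∏ j, csign (ε j)) • P (z ε) = c0 • M x := by
      simp_rw [hz, hP]
      exact hpol
    rw [this, smul_smul, inv_mul_cancel₀ hc0ne, one_smul]
  rw [← key]
  exact Set.mem_image_of_mem φ (fun ε _ => hwQ ε)

/-- Let `P` be a compact continuous `l`-homogeneous polynomial with
(symmetric) polar `M`. If `f_n^{(j)} : 𝕋 → X` are strongly measurable with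
`‖f_n^{(j)}(t)‖ ≤ 1` a.e., and for every `y*` in the closed unit ball of `Y*`
`∫₀^{2π} |y*(M(f_n^{(1)}(t),…,f_n^{(l)}(t)))|^k dt → 0`, then
`∫₀^{2π} ‖M(f_n^{(1)}(t),…,f_n^{(l)}(t))‖^k dt → 0`. -/
theorem stmt6 {X Y : Type*} [NormedAddCommGroup X] [NormedSpace ℂ X] [CompleteSpace X]
    [NormedAddCommGroup Y] [NormedSpace ℂ Y] [CompleteSpace Y]
    (l : ℕ) (hl : 1 ≤ l)
    (M : ContinuousMultilinearMap ℂ (fun _ : Fin l => X) Y)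
    (hsymm : ∀ (v : Fin l → X) (σ : Equiv.Perm (Fin l)), M (v ∘ σ) = M v)
    (P : X → Y) (hP : ∀ x, P x = M (fun _ => x))
    (hPcomp : IsCompact (closure (P '' Metric.closedBall 0 1)))
    (k : ℕ) (hk : 1 ≤ k)
    (f : ℕ → Fin l → ℝ → X)
    (hmeas : ∀ n j, AEStronglyMeasurable (f n j)
      (volume.restrict (Set.Ioc (0:ℝ) (2 * Real.pi))))
    (hbdd : ∀ n j, ∀ᵐ t ∂(volume.restrict (Set.Ioc (0:ℝ) (2 * Real.pi))), ‖f n j t‖ ≤ 1)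
    (hweak : ∀ y : Y →L[ℂ] ℂ, ‖y‖ ≤ 1 →
      Tendsto (fun n => ∫ t in (0:ℝ)..(2 * Real.pi), ‖y (M (fun j => f n j t))‖ ^ k)
        atTop (nhds 0)) :
    Tendsto (fun n => ∫ t in (0:ℝ)..(2 * Real.pi), ‖M (fun j => f n j t)‖ ^ k)
      atTop (nhds 0) := by
  classical
  set μ := volume.restrict (Set.Ioc (0:ℝ) (2 * Real.pi)) with hμ
  have h2π : (0:ℝ) ≤ 2 * Real.pi := by positivity
  haveI : IsFiniteMeasure μ := by
    constructor
    rw [hμ, Measure.restrict_apply_univ]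
    exact measure_Ioc_lt_top
  set F : ℕ → ℝ → Y := fun n t => M (fun j => f n j t) with hF
  have hF_aesm : ∀ n, AEStronglyMeasurable (F n) μ := fun n => aesm_multilinear M (hmeas n)
  set C : ℝ := ‖M‖ + 1 with hC
  have hCpos : 0 < C := by positivity
  have hball : ∀ n, ∀ᵐ t ∂μ, ∀ j, ‖f n j t‖ ≤ 1 := fun n => ae_all_iff.mpr (hbdd n)
  have hFbdd : ∀ n, ∀ᵐ t ∂μ, ‖F n t‖ ≤ C := by
    intro n
    filter_upwards [hball n] with t ht
    calc ‖F n t‖ ≤ ‖M‖ * ∏ j, ‖f n j t‖ := M.le_opNorm _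
      _ ≤ ‖M‖ * 1 := by
          apply mul_le_mul_of_nonneg_left _ (norm_nonneg M)
          exact Finset.prod_le_one (fun j _ => norm_nonneg _) (fun j _ => ht j)
      _ ≤ C := by rw [mul_one]; simp [hC]
  -- integrability
  have hInt1 : ∀ n, Integrable (fun t => ‖F n t‖ ^ k) μ := by
    intro n
    refine ⟨(continuous_pow k).comp_aestronglyMeasurable (hF_aesm n).norm, ?_⟩
    apply HasFiniteIntegral.of_bounded (C := C ^ k)
    filter_upwards [hFbdd n] with t ht
    rw [Real.norm_eq_abs, abs_of_nonneg (by positivity)]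
    exact pow_le_pow_left₀ (norm_nonneg _) ht k
  have hInt2 : ∀ n (ψ : Y →L[ℂ] ℂ), ‖ψ‖ ≤ 1 →
      Integrable (fun t => ‖ψ (F n t)‖ ^ k) μ := by
    intro n ψ hψ
    refine ⟨(continuous_pow k).comp_aestronglyMeasurable
      (ψ.continuous.comp_aestronglyMeasurable (hF_aesm n)).norm, ?_⟩
    apply HasFiniteIntegral.of_bounded (C := C ^ k)
    filter_upwards [hFbdd n] with t ht
    rw [Real.norm_eq_abs, abs_of_nonneg (by positivity)]
    apply pow_le_pow_left₀ (norm_nonneg _)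
    calc ‖ψ (F n t)‖ ≤ ‖ψ‖ * ‖F n t‖ := ψ.le_opNorm _
      _ ≤ 1 * C := mul_le_mul hψ ht (norm_nonneg _) zero_le_one
      _ = C := one_mul _
  -- compact absorbing set
  obtain ⟨K, hKcomp, hKmem⟩ := exists_compact_absorbing hl M hsymm P hP hPcomp
  -- rewrite interval integrals as set integrals
  have hIoc : ∀ (g : ℝ → ℝ), (∫ t in (0:ℝ)..(2 * Real.pi), g t) = ∫ t, g t ∂μ := by
    intro g
    rw [intervalIntegral.integral_of_le h2π, hμ]
  simp only [hIoc]
  rw [Metric.tendsto_atTop]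
  intro ε hε
  set A : ℝ := (2 * Real.pi) * (k * C ^ (k - 1)) with hA
  have hAnn : 0 ≤ A := by positivity
  set δ : ℝ := ε / (2 * (A + 1)) with hδdef
  have hδpos : 0 < δ := by positivity
  obtain ⟨s, hs1, hs2⟩ := norm_net hKcomp hδpos
  -- the finite sum of weak integrals tends to 0
  have hsumT : Tendsto (fun n => ∑ ψ ∈ s, ∫ t, ‖ψ (F n t)‖ ^ k ∂μ) atTop (nhds 0) := by
    have := tendsto_finset_sum s (fun ψ hψ => hweak ψ (hs1 ψ hψ))
    rw [Finset.sum_const, smul_zero] at this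
    convert this using 2 with n
    refine Finset.sum_congr rfl fun ψ _ => ?_
    rw [hIoc]
  rw [Metric.tendsto_atTop] at hsumT
  obtain ⟨N, hN⟩ := hsumT (ε / 2) (by positivity)
  refine ⟨N, fun n hn => ?_⟩
  have hGnn : 0 ≤ ∫ t, ‖F n t‖ ^ k ∂μ := integral_nonneg fun t => by positivity
  rw [Real.dist_eq, sub_zero, abs_of_nonneg hGnn]
  -- pointwise bound
  have hae : ∀ᵐ t ∂μ, ‖F n t‖ ^ k ≤ (∑ ψ ∈ s, ‖ψ (F n t)‖ ^ k) + k * C ^ (k - 1) * δ := by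
    filter_upwards [hball n, hFbdd n] with t ht htC
    have hKt : F n t ∈ K := hKmem _ ht
    obtain ⟨ψ, hψs, hψle⟩ := hs2 _ hKt
    have hb : ‖ψ (F n t)‖ ≤ C := by
      calc ‖ψ (F n t)‖ ≤ ‖ψ‖ * ‖F n t‖ := ψ.le_opNorm _
        _ ≤ 1 * C := mul_le_mul (hs1 ψ hψs) htC (norm_nonneg _) zero_le_one
        _ = C := one_mul _
    have hest := pow_estimate hk (norm_nonneg (F n t)) (norm_nonneg _)
      htC hb hψle hδpos.le
    refine le_trans hest (add_le_add ?_ le_rfl)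
    exact Finset.single_le_sum (f := fun ψ' => ‖ψ' (F n t)‖ ^ k) (fun ψ' _ => by positivity) hψs
  have hIntSum : Integrable (fun t => (∑ ψ ∈ s, ‖ψ (F n t)‖ ^ k) + k * C ^ (k - 1) * δ) μ := by
    apply Integrable.add
    · exact integrable_finset_sum s (fun ψ hψ => hInt2 n ψ (hs1 ψ hψ))
    · exact integrable_const _
  have hmono := integral_mono_ae (hInt1 n) hIntSum hae
  rw [integral_add (integrable_finset_sum s (fun ψ hψ => hInt2 n ψ (hs1 ψ hψ)))
    (integrable_const _), integral_finset_sum s (fun ψ hψ => hInt2 n ψ (hs1 ψ hψ)),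
    integral_const] at hmono
  have hμuniv : (μ Set.univ).toReal = 2 * Real.pi := by
    rw [hμ, Measure.restrict_apply_univ, Real.volume_Ioc]
    rw [ENNReal.toReal_ofReal (by linarith)]
    ring
  rw [measureReal_def, hμuniv] at hmono
  have hsum_small : ∑ ψ ∈ s, ∫ t, ‖ψ (F n t)‖ ^ k ∂μ < ε / 2 := by
    have := hN n hn
    rw [Real.dist_eq, sub_zero] at this
    exact lt_of_le_of_lt (le_abs_self _) this
  have hconst_small : (2 * Real.pi) • (k * C ^ (k - 1) * δ) < ε / 2 := by
    rw [smul_eq_mul]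
    have : (2 * Real.pi) * (k * C ^ (k - 1) * δ) = A * δ := by rw [hA]; ring
    rw [this, hδdef, ← mul_div_assoc, div_lt_iff₀ (by positivity : (0:ℝ) < 2 * (A + 1))]
    nlinarith [hAnn, hε]
  linarith
end

section
/- Let X and Y be complex Banach spaces, let l ≥ 1, and let T : X × ⋯ × X → Y be a continuous symmetric l-linear map which is compact, i.e. T(B_X × ⋯ × B_X) is relatively compact in Y. Let (y_m*)_{m≥1} be a sequence in the closed unit ball B_{Y*} of the dual Y* such that {y_m* ∘ T : m ≥ 1} is dense in {y* ∘ T : y* ∈ B_{Y*}} with respect to the operator norm on continuous l-linear forms. If (ζ_n^{(1)})_n, …, (ζ_n^{(l)})_n are bounded sequences in X such that lim_{n→∞} y_m*(T(ζ_n^{(1)}, …, ζ_n^{(l)})) = 0 for every m ≥ 1, then lim_{n→∞} ‖T(ζ_n^{(1)}, …, ζ_n^{(l)})‖_Y = 0. -/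
open Filter

/-- Let `T` be a compact continuous symmetric `l`-linear map between
complex Banach spaces, and `(y_m*)` a sequence in the closed unit ball of `Y*` such
that `{y_m* ∘ T}` is dense in `{y* ∘ T : y* ∈ B_{Y*}}`. If `(ζ_n^{(j)})` are bounded
sequences in `X` with `y_m*(T(ζ_n^{(1)},…,ζ_n^{(l)})) → 0` for all `m`, then
`‖T(ζ_n^{(1)},…,ζ_n^{(l)})‖ → 0`. -/
theorem stmt7 {X Y : Type*} [NormedAddCommGroup X] [NormedSpace ℂ X] [CompleteSpace X]
    [NormedAddCommGroup Y] [NormedSpace ℂ Y] [CompleteSpace Y]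
    (l : ℕ) (hl : 1 ≤ l)
    (T : ContinuousMultilinearMap ℂ (fun _ : Fin l => X) Y)
    (hsymm : ∀ (v : Fin l → X) (σ : Equiv.Perm (Fin l)), T (v ∘ σ) = T v)
    (hTcomp : IsCompact (closure (T '' {v : Fin l → X | ∀ i, ‖v i‖ ≤ 1})))
    (y : ℕ → (Y →L[ℂ] ℂ)) (hy : ∀ m, ‖y m‖ ≤ 1)
    (hdense : ∀ g : Y →L[ℂ] ℂ, ‖g‖ ≤ 1 →
      g.compContinuousMultilinearMap T ∈
        closure (Set.range fun m => (y m).compContinuousMultilinearMap T))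
    (ζ : ℕ → Fin l → X) (C : ℝ) (hbdd : ∀ n j, ‖ζ n j‖ ≤ C)
    (hweak : ∀ m, Tendsto (fun n => y m (T (ζ n))) atTop (nhds 0)) :
    Tendsto (fun n => ‖T (ζ n)‖) atTop (nhds 0) := by
  by_contra hcon
  rw [Metric.tendsto_atTop] at hcon
  push_neg at hcon
  obtain ⟨δ, hδ, hfreq⟩ := hcon
  have hfreq' : ∃ᶠ n in atTop, δ ≤ ‖T (ζ n)‖ := by
    rw [Filter.frequently_atTop]
    intro N
    obtain ⟨n, hn, hd⟩ := hfreq N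
    refine ⟨n, hn, ?_⟩
    simpa [Real.dist_eq, abs_of_nonneg (norm_nonneg _)] using hd
  obtain ⟨φ, hφ, hφδ⟩ := Filter.extraction_of_frequently_atTop hfreq'
  set C' : ℝ := max C 1 with hC'
  have hC'pos : (0 : ℝ) < C' := lt_of_lt_of_le one_pos (le_max_right _ _)
  set c : ℝ := C'⁻¹ with hc
  have hcpos : 0 < c := inv_pos.mpr hC'pos
  set u : ℕ → Y := fun n => T (fun i => (c : ℂ) • ζ n i) with hu
  have hnorm1 : ∀ n i, ‖(c : ℂ) • ζ n i‖ ≤ 1 := by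
    intro n i
    rw [norm_smul]
    have hcn : ‖(c : ℂ)‖ = c := by
      rw [Complex.norm_real, Real.norm_eq_abs, abs_of_pos hcpos]
    rw [hcn]
    calc c * ‖ζ n i‖ ≤ c * C' := by
          exact mul_le_mul_of_nonneg_left
            (le_trans (hbdd n i) (le_max_left _ _)) hcpos.le
      _ = 1 := inv_mul_cancel₀ hC'pos.ne'
  have humem : ∀ n, u n ∈ closure (T '' {v : Fin l → X | ∀ i, ‖v i‖ ≤ 1}) := fun n =>
    subset_closure ⟨_, fun i => hnorm1 n i, rfl⟩
  have husmul : ∀ n, u n = ((c : ℂ) ^ l) • T (ζ n) := by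
    intro n
    have h := T.map_smul_univ (fun _ : Fin l => (c : ℂ)) (ζ n)
    show T (fun i => (c : ℂ) • ζ n i) = _
    simpa [Finset.prod_const] using h
  have hunorm : ∀ n, ‖u n‖ = c ^ l * ‖T (ζ n)‖ := by
    intro n
    rw [husmul, norm_smul, norm_pow]
    congr 2
    rw [Complex.norm_real, Real.norm_eq_abs, abs_of_pos hcpos]
  obtain ⟨w, hwK, ψ, hψ, hwlim⟩ := hTcomp.tendsto_subseq (fun n => humem (φ n))
  have hwpos : 0 < ‖w‖ := by
    have hlim : Tendsto (fun n => ‖u (φ (ψ n))‖) atTop (nhds ‖w‖) :=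
      (continuous_norm.tendsto w).comp hwlim
    have hge : ∀ n, c ^ l * δ ≤ ‖u (φ (ψ n))‖ := by
      intro n
      rw [hunorm]
      exact mul_le_mul_of_nonneg_left (hφδ (ψ n)) (pow_nonneg hcpos.le l)
    have hle := ge_of_tendsto hlim (Filter.Eventually.of_forall hge)
    exact lt_of_lt_of_le (mul_pos (pow_pos hcpos l) hδ) hle
  have hwne : w ≠ 0 := by
    intro h; rw [h, norm_zero] at hwpos; exact lt_irrefl _ hwpos
  have hymw : ∀ m, y m w = 0 := by
    intro m
    have h1 : Tendsto (fun n => y m (u (φ (ψ n)))) atTop (nhds (y m w)) :=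
      ((y m).continuous.tendsto w).comp hwlim
    have h2 : Tendsto (fun n => y m (u (φ (ψ n)))) atTop (nhds 0) := by
      have h0 : Tendsto (fun n => y m (u n)) atTop (nhds 0) := by
        have heq : (fun n => y m (u n)) = fun n => ((c : ℂ) ^ l) * y m (T (ζ n)) := by
          funext n; rw [husmul]; simp
        rw [heq]
        simpa using (hweak m).const_mul ((c : ℂ) ^ l)
      exact h0.comp ((hφ.comp hψ).tendsto_atTop)
    exact tendsto_nhds_unique h1 h2
  obtain ⟨g, hgnorm, hgw⟩ := exists_dual_vector ℂ w (norm_ne_zero_iff.mpr hwne)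
  have hdense' := hdense g (le_of_eq hgnorm)
  rw [Metric.mem_closure_iff] at hdense'
  obtain ⟨_, ⟨m, rfl⟩, hm⟩ := hdense' (‖w‖ / 2) (by linarith)
  set D : ContinuousMultilinearMap ℂ (fun _ : Fin l => X) ℂ :=
    g.compContinuousMultilinearMap T - (y m).compContinuousMultilinearMap T with hD
  have hDnorm : ‖D‖ ≤ ‖w‖ / 2 := by
    rw [hD]
    have := hm.le
    rwa [dist_eq_norm] at this
  have hptwise : ∀ n, ‖g (u n) - y m (u n)‖ ≤ ‖w‖ / 2 := by
    intro n
    have h1 : ‖D (fun i => (c : ℂ) • ζ n i)‖ ≤ ‖D‖ * ∏ i, ‖(c : ℂ) • ζ n i‖ :=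
      D.le_opNorm _
    have h2 : ∏ i, ‖(c : ℂ) • ζ n i‖ ≤ 1 :=
      Finset.prod_le_one (fun i _ => norm_nonneg _) (fun i _ => hnorm1 n i)
    have h3 : ‖D (fun i => (c : ℂ) • ζ n i)‖ ≤ ‖D‖ := by
      calc ‖D (fun i => (c : ℂ) • ζ n i)‖ ≤ ‖D‖ * ∏ i, ‖(c : ℂ) • ζ n i‖ := h1
        _ ≤ ‖D‖ * 1 := by
            exact mul_le_mul_of_nonneg_left h2 (norm_nonneg _)
        _ = ‖D‖ := mul_one _
    have hDv : D (fun i => (c : ℂ) • ζ n i) = g (u n) - y m (u n) := by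
      rw [hD]; simp [hu]
    rw [← hDv]
    exact h3.trans hDnorm
  have hlim2 : Tendsto (fun n => ‖g (u (φ (ψ n))) - y m (u (φ (ψ n)))‖) atTop
      (nhds ‖g w - y m w‖) := by
    have : Continuous fun z : Y => ‖g z - y m z‖ :=
      (g.continuous.sub (y m).continuous).norm
    exact (this.tendsto w).comp hwlim
  have hfinal : ‖g w - y m w‖ ≤ ‖w‖ / 2 :=
    le_of_tendsto hlim2 (Filter.Eventually.of_forall fun n => hptwise _)
  rw [hymw m, sub_zero, hgw] at hfinal
  simp at hfinal
  linarith
end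

section
/- Let X and Y be complex Banach spaces, let l ≥ 1, and let T : X × ⋯ × X → Y be a continuous symmetric l-linear map which is compact, i.e. T(B_X × ⋯ × B_X) is relatively compact in Y. Let (y_m*)_{m≥1} be a sequence in the closed unit ball B_{Y*} of the dual Y* such that {y_m* ∘ T : m ≥ 1} is dense in {y* ∘ T : y* ∈ B_{Y*}} with respect to the operator norm on continuous l-linear forms. Then for every k ≥ 1 and every ε > 0 there exists a constant C > 0 such that for all x^{(1)}, …, x^{(l)} ∈ X: ‖T(x^{(1)}, …, x^{(l)})‖_Y^k ≤ ε · (‖x^{(1)}‖_X^k ⋯ ‖x^{(l)}‖_X^k) + C · Σ_{m=1}^{∞} 2^{−m} |y_m*(T(x^{(1)}, …, x^{(l)}))|^k. -/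
open Filter

/-- Let `T` be a compact continuous symmetric `l`-linear map between
complex Banach spaces, and `(y_m*)_{m ≥ 1}` a sequence in the closed unit ball of `Y*`
(indexed here by `m : ℕ`, with `y m` standing for `y_{m+1}*`) such that `{y_m* ∘ T}`
is dense in `{y* ∘ T : y* ∈ B_{Y*}}`. Then for every `k ≥ 1` and `ε > 0` there is
`C > 0` with
`‖T x‖^k ≤ ε ∏ⱼ ‖x⁽ʲ⁾‖^k + C ∑_{m=1}^∞ 2^{-m} |y_m*(T x)|^k` for all `x⁽ʲ⁾ ∈ X`. -/
theorem stmt8 {X Y : Type*} [NormedAddCommGroup X] [NormedSpace ℂ X] [CompleteSpace X]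
    [NormedAddCommGroup Y] [NormedSpace ℂ Y] [CompleteSpace Y]
    (l : ℕ) (hl : 1 ≤ l)
    (T : ContinuousMultilinearMap ℂ (fun _ : Fin l => X) Y)
    (hsymm : ∀ (v : Fin l → X) (σ : Equiv.Perm (Fin l)), T (v ∘ σ) = T v)
    (hTcomp : IsCompact (closure (T '' {v : Fin l → X | ∀ i, ‖v i‖ ≤ 1})))
    (y : ℕ → (Y →L[ℂ] ℂ)) (hy : ∀ m, ‖y m‖ ≤ 1)
    (hdense : ∀ g : Y →L[ℂ] ℂ, ‖g‖ ≤ 1 →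
      g.compContinuousMultilinearMap T ∈
        closure (Set.range fun m => (y m).compContinuousMultilinearMap T)) :
    ∀ k : ℕ, 1 ≤ k → ∀ ε : ℝ, 0 < ε → ∃ C : ℝ, 0 < C ∧
      ∀ x : Fin l → X,
        ‖T x‖ ^ k ≤ ε * ∏ j, ‖x j‖ ^ k +
          C * ∑' m : ℕ, (2 : ℝ)⁻¹ ^ (m + 1) * ‖y m (T x)‖ ^ k := by
  intro k hk ε hε
  have hk0 : k ≠ 0 := by omega
  -- bound on each functional
  have hyb : ∀ (m : ℕ) (w : Y), ‖y m w‖ ≤ ‖w‖ := by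
    intro m w
    calc ‖y m w‖ ≤ ‖y m‖ * ‖w‖ := (y m).le_opNorm w
      _ ≤ 1 * ‖w‖ := mul_le_mul_of_nonneg_right (hy m) (norm_nonneg w)
      _ = ‖w‖ := one_mul _
  -- summability of the series for each w
  have hgeo : Summable (fun m : ℕ => (2:ℝ)⁻¹ ^ m) :=
    summable_geometric_of_lt_one (by norm_num) (by norm_num)
  have hsum : ∀ w : Y, Summable (fun m : ℕ => (2:ℝ)⁻¹ ^ (m + 1) * ‖y m w‖ ^ k) := by
    intro w
    refine Summable.of_nonneg_of_le (fun m => by positivity) (fun m => ?_)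
      (((hgeo.mul_right (‖w‖ ^ k)).mul_left 2⁻¹).congr
        (fun m => by ring : ∀ m : ℕ, 2⁻¹ * ((2:ℝ)⁻¹ ^ m * ‖w‖ ^ k) = (2:ℝ)⁻¹ ^ (m + 1) * ‖w‖ ^ k))
    exact mul_le_mul_of_nonneg_left
      (pow_le_pow_left₀ (norm_nonneg _) (hyb m w) k) (by positivity)
  -- the Hahn-Banach / density estimate
  have key : ∀ v : Fin l → X, ‖T v‖ ≤ ⨆ m, ‖y m (T v)‖ := by
    intro v
    have hbdd : BddAbove (Set.range fun m => ‖y m (T v)‖) := by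
      refine ⟨‖T v‖, ?_⟩
      rintro _ ⟨m, rfl⟩
      exact hyb m _
    rcases eq_or_ne (T v) 0 with h0 | h0
    · rw [h0, norm_zero]
      have hbdd' : BddAbove (Set.range fun m => ‖y m (0:Y)‖) := by rw [← h0]; exact hbdd
      exact le_trans (norm_nonneg ((y 0) (0:Y))) (le_ciSup hbdd' 0)
    · obtain ⟨g, hg1, hgw⟩ := exists_dual_vector ℂ (T v) (norm_ne_zero_iff.mpr h0)
      refine le_of_forall_pos_le_add fun δ hδ => ?_
      set P := ∏ j, ‖v j‖ with hP
      have hP0 : 0 ≤ P := Finset.prod_nonneg fun j _ => norm_nonneg _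
      have hmem := hdense g (le_of_eq hg1)
      rw [Metric.mem_closure_iff] at hmem
      obtain ⟨b, ⟨m, rfl⟩, hb⟩ := hmem (δ / (P + 1)) (by positivity)
      rw [dist_eq_norm] at hb
      have happ : ‖g (T v) - y m (T v)‖ ≤ δ / (P + 1) * P := by
        have h2 := (g.compContinuousMultilinearMap T -
          (y m).compContinuousMultilinearMap T).le_opNorm v
        simp only [ContinuousMultilinearMap.sub_apply,
          ContinuousLinearMap.compContinuousMultilinearMap_coe, Function.comp_apply] at h2
        exact h2.trans (mul_le_mul_of_nonneg_right hb.le hP0)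
      have hgv : ‖g (T v)‖ = ‖T v‖ := by
        rw [hgw, RCLike.norm_ofReal, abs_of_nonneg (norm_nonneg _)]
      have hym : ‖y m (T v)‖ ≤ ⨆ m, ‖y m (T v)‖ := le_ciSup hbdd m
      have hdp : δ / (P + 1) * P ≤ δ := by
        rw [div_mul_eq_mul_div, div_le_iff₀ (by positivity)]
        nlinarith
      calc ‖T v‖ = ‖g (T v)‖ := hgv.symm
        _ ≤ ‖y m (T v)‖ + ‖g (T v) - y m (T v)‖ := by
            have h3 := norm_sub_norm_le (g (T v)) (y m (T v))
            linarith
        _ ≤ (⨆ m, ‖y m (T v)‖) + δ := add_le_add hym (happ.trans hdp)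
  -- reduce to the normalized case
  suffices h : ∃ C : ℝ, 0 < C ∧ ∀ v : Fin l → X, (∀ j, ‖v j‖ ≤ 1) →
      ‖T v‖ ^ k ≤ ε + C * ∑' m : ℕ, (2 : ℝ)⁻¹ ^ (m + 1) * ‖y m (T v)‖ ^ k by
    obtain ⟨C, hC, hCv⟩ := h
    refine ⟨C, hC, fun x => ?_⟩
    by_cases hx : ∃ j, x j = 0
    · obtain ⟨j, hj⟩ := hx
      rw [T.map_coord_zero j hj, norm_zero, zero_pow hk0]
      have h2 : 0 ≤ ∑' m : ℕ, (2 : ℝ)⁻¹ ^ (m + 1) * ‖y m (0:Y)‖ ^ k :=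
        tsum_nonneg fun m => by positivity
      have h1 : 0 ≤ ε * ∏ j, ‖x j‖ ^ k := by positivity
      nlinarith
    · push_neg at hx
      set v : Fin l → X := fun j => (‖x j‖ : ℂ)⁻¹ • x j with hv
      have hvn : ∀ j, ‖v j‖ = 1 := by
        intro j
        have hxj : ‖x j‖ ≠ 0 := norm_ne_zero_iff.mpr (hx j)
        rw [hv]
        simp only [norm_smul, norm_inv, Complex.norm_real, norm_norm]
        field_simp
      have hTx : T x = (∏ j, (‖x j‖ : ℂ)) • T v := by
        rw [← T.map_smul_univ]
        congr 1
        funext j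
        have hxj : (‖x j‖ : ℂ) ≠ 0 := by
          simpa using norm_ne_zero_iff.mpr (hx j)
        rw [hv]
        simp [smul_smul, mul_inv_cancel₀ hxj]
      set P := ∏ j, ‖x j‖ with hPdef
      have hP0 : 0 ≤ P := Finset.prod_nonneg fun j _ => norm_nonneg _
      have hnormprod : ‖(∏ j, (‖x j‖ : ℂ))‖ = P := by
        rw [← Complex.ofReal_prod, Complex.norm_real, Real.norm_eq_abs, abs_of_nonneg hP0]
      have hTxn : ‖T x‖ = P * ‖T v‖ := by
        rw [hTx, norm_smul, hnormprod]
      have hymx : ∀ m, ‖y m (T x)‖ = P * ‖y m (T v)‖ := by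
        intro m
        rw [hTx, map_smul, norm_smul, hnormprod]
      have hmain := hCv v (fun j => (hvn j).le)
      have hprod : ∏ j, ‖x j‖ ^ k = P ^ k := by
        rw [hPdef, ← Finset.prod_pow]
      have htsum : ∑' m : ℕ, (2 : ℝ)⁻¹ ^ (m + 1) * ‖y m (T x)‖ ^ k
          = P ^ k * ∑' m : ℕ, (2 : ℝ)⁻¹ ^ (m + 1) * ‖y m (T v)‖ ^ k := by
        rw [← tsum_mul_left]
        exact tsum_congr fun m => by rw [hymx m, mul_pow]; ring
      calc ‖T x‖ ^ k = P ^ k * ‖T v‖ ^ k := by rw [hTxn, mul_pow]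
        _ ≤ P ^ k * (ε + C * ∑' m : ℕ, (2 : ℝ)⁻¹ ^ (m + 1) * ‖y m (T v)‖ ^ k) :=
            mul_le_mul_of_nonneg_left hmain (by positivity)
        _ = ε * ∏ j, ‖x j‖ ^ k + C * ∑' m : ℕ, (2 : ℝ)⁻¹ ^ (m + 1) * ‖y m (T x)‖ ^ k := by
            rw [hprod, htsum]; ring
  -- prove the normalized statement by contradiction, using compactness
  by_contra hcon
  push_neg at hcon
  choose v hv1 hv2 using fun n : ℕ => hcon (n + 1) (by positivity)
  -- hv2 n : ε + (n+1) * S n < ‖T (v n)‖ ^ k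
  have hTvb : ∀ n, ‖T (v n)‖ ≤ ‖T‖ := by
    intro n
    calc ‖T (v n)‖ ≤ ‖T‖ * ∏ j, ‖v n j‖ := T.le_opNorm _
      _ ≤ ‖T‖ * 1 := mul_le_mul_of_nonneg_left
          (Finset.prod_le_one (fun j _ => norm_nonneg _) (fun j _ => hv1 n j)) (norm_nonneg T)
      _ = ‖T‖ := mul_one _
  have hS0 : ∀ n, 0 ≤ ∑' m : ℕ, (2 : ℝ)⁻¹ ^ (m + 1) * ‖y m (T (v n))‖ ^ k :=
    fun n => tsum_nonneg fun m => by positivity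
  have hSbound : ∀ n : ℕ, ((n:ℝ) + 1) * ∑' m : ℕ, (2 : ℝ)⁻¹ ^ (m + 1) * ‖y m (T (v n))‖ ^ k
      ≤ ‖T‖ ^ k := by
    intro n
    have h1 := hv2 n
    have h2 : ‖T (v n)‖ ^ k ≤ ‖T‖ ^ k := pow_le_pow_left₀ (norm_nonneg _) (hTvb n) k
    linarith
  -- each term of the series tends to 0 in n (in the k-th power form)
  have hterm : ∀ m n : ℕ, ‖y m (T (v n))‖ ^ k ≤ (2:ℝ) ^ (m + 1) * ‖T‖ ^ k / ((n:ℝ) + 1) := by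
    intro m n
    have h1 : (2 : ℝ)⁻¹ ^ (m + 1) * ‖y m (T (v n))‖ ^ k
        ≤ ∑' m : ℕ, (2 : ℝ)⁻¹ ^ (m + 1) * ‖y m (T (v n))‖ ^ k :=
      Summable.le_tsum (hsum (T (v n))) m (fun m' _ => by positivity)
    have h3 : (0:ℝ) < (n:ℝ) + 1 := by positivity
    have h4 : ((n:ℝ) + 1) * ((2 : ℝ)⁻¹ ^ (m + 1) * ‖y m (T (v n))‖ ^ k) ≤ ‖T‖ ^ k :=
      le_trans (mul_le_mul_of_nonneg_left h1 h3.le) (hSbound n)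
    have h5 : (0:ℝ) < (2:ℝ) ^ (m + 1) := by positivity
    have hpow : (2:ℝ) ^ (m + 1) * (2:ℝ)⁻¹ ^ (m + 1) = 1 := by
      rw [← mul_pow]; norm_num
    rw [le_div_iff₀ h3]
    calc ‖y m (T (v n))‖ ^ k * ((n:ℝ) + 1)
        = (2:ℝ) ^ (m + 1) * (((n:ℝ) + 1) * ((2 : ℝ)⁻¹ ^ (m + 1) * ‖y m (T (v n))‖ ^ k)) := by
          rw [show (2:ℝ) ^ (m + 1) * (((n:ℝ) + 1) * ((2 : ℝ)⁻¹ ^ (m + 1) * ‖y m (T (v n))‖ ^ k))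
            = ((2:ℝ) ^ (m + 1) * (2:ℝ)⁻¹ ^ (m + 1)) * (‖y m (T (v n))‖ ^ k * ((n:ℝ) + 1)) from by
              ring, hpow, one_mul]
      _ ≤ (2:ℝ) ^ (m + 1) * ‖T‖ ^ k := mul_le_mul_of_nonneg_left h4 h5.le
  -- extract a convergent subsequence of T (v n)
  have hmemcl : ∀ n, T (v n) ∈ closure (T '' {v : Fin l → X | ∀ i, ‖v i‖ ≤ 1}) :=
    fun n => subset_closure ⟨v n, hv1 n, rfl⟩
  obtain ⟨z, hz, φ, hφ, hφt⟩ := hTcomp.tendsto_subseq hmemcl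
  -- y m z = 0 for all m
  have hyz : ∀ m, y m z = 0 := by
    intro m
    have h1 : Tendsto (fun n => ‖y m (T (v (φ n)))‖ ^ k) atTop (nhds (‖y m z‖ ^ k)) := by
      have hc : Continuous fun w : Y => ‖y m w‖ ^ k := ((y m).continuous.norm).pow k
      exact (hc.tendsto z).comp hφt
    have h2 : Tendsto (fun n => ‖y m (T (v (φ n)))‖ ^ k) atTop (nhds 0) := by
      apply squeeze_zero (fun n => by positivity) (fun n => hterm m (φ n))
      have h3 : Tendsto (fun n : ℕ => (2:ℝ) ^ (m + 1) * ‖T‖ ^ k / ((n:ℝ) + 1)) atTop (nhds 0) :=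
        tendsto_const_nhds.div_atTop
          (tendsto_atTop_add_const_right _ 1 tendsto_natCast_atTop_atTop)
      exact h3.comp hφ.tendsto_atTop
    have h4 : ‖y m z‖ ^ k = 0 := tendsto_nhds_unique h1 h2
    exact norm_eq_zero.mp ((pow_eq_zero_iff hk0).mp h4)
  -- then ‖T (v (φ n))‖ ≤ ‖T (v (φ n)) - z‖ → 0
  have hfinal : ∀ n, ‖T (v (φ n))‖ ≤ ‖T (v (φ n)) - z‖ := by
    intro n
    refine (key (v (φ n))).trans (ciSup_le fun m => ?_)
    calc ‖y m (T (v (φ n)))‖ = ‖y m (T (v (φ n)) - z)‖ := by rw [map_sub, hyz m, sub_zero]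
      _ ≤ ‖T (v (φ n)) - z‖ := hyb m _
  have htend0 : Tendsto (fun n => ‖T (v (φ n))‖) atTop (nhds 0) := by
    apply squeeze_zero (fun n => norm_nonneg _) hfinal
    have h5 : Tendsto (fun n => T (v (φ n)) - z) atTop (nhds 0) := by
      simpa using hφt.sub (tendsto_const_nhds (x := z))
    simpa using h5.norm
  have htendk : Tendsto (fun n => ‖T (v (φ n))‖ ^ k) atTop (nhds 0) := by
    have h6 := htend0.pow k
    simpa [zero_pow hk0] using h6
  have hge : ∀ n, ε ≤ ‖T (v (φ n))‖ ^ k := by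
    intro n
    have h1 := hv2 (φ n)
    have h2 := hS0 (φ n)
    nlinarith [mul_nonneg (by positivity : (0:ℝ) ≤ ((φ n : ℕ):ℝ) + 1) (hS0 (φ n))]
  have hfin := ge_of_tendsto htendk (Eventually.of_forall hge)
  linarith
end
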